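/- The radius √((4 − √13)/3) cannot be improved in the derivative comparison theorem for odd analytic functions: for every r with √((4 − √13)/3) < r < 1 there exist odd analytic functions f, g on the open unit disk D such that g is subordinate to f, |g(z)| ≤ |f(z)| for all z ∈ D, and M_{g'}(r) > M_{f'}(r). (One may take f(z) = z and g(z) = g_a(z) := z(z²−a)/(1−az²) with a ∈ [0,1) close to 1.) -/

import Mathlib

open Metric

/-- The majorant series `M_F(r) = ∑ |A_n| r^n` of an analytic function
`F(z) = ∑ A_n z^n` on the unit disk, where `A_n = F⁽ⁿ⁾(0)/n!`. -/
noncomputable def majorant (F : ℂ → ℂ) (r : ℝ) : ℝ :=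
  ∑' n : ℕ, ‖iteratedDeriv n F 0 / n.factorial‖ * r ^ n

/-- `g` is subordinate to `f` on the unit disk: `g = f ∘ φ` for some analytic
self-map `φ` of the unit disk with `φ 0 = 0`. -/
def Subordinate (g f : ℂ → ℂ) : Prop :=
  ∃ φ : ℂ → ℂ, AnalyticOnNhd ℂ φ (ball 0 1) ∧ φ 0 = 0 ∧
    Set.MapsTo φ (ball 0 1) (ball 0 1) ∧ Set.EqOn g (f ∘ φ) (ball 0 1)

/-! ### Auxiliary material -/

namespace SharpAux

open NNReal ENNReal

/-- Coefficients of the derivative of `g_a(z) = z(z²-a)/(1-az²)`. -/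
noncomputable def dd (a : ℝ) (n : ℕ) : ℂ :=
  if n = 0 then -(a : ℂ)
  else if n % 2 = 0 then ((n + 1 : ℕ) : ℂ) * (1 - (a : ℂ) ^ 2) * (a : ℂ) ^ (n / 2 - 1)
  else 0

lemma dd_odd (a : ℝ) {n : ℕ} (h : n % 2 = 1) : dd a n = 0 := by
  have h0 : n ≠ 0 := by omega
  have h1 : n % 2 ≠ 0 := by omega
  simp [dd, h0, h1]

lemma dd_even (a : ℝ) (k : ℕ) :
    dd a (2 * k + 2) = ((2 * k + 3 : ℕ) : ℂ) * (1 - (a : ℂ) ^ 2) * (a : ℂ) ^ k := by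
  have h0 : 2 * k + 2 ≠ 0 := by omega
  have h1 : (2 * k + 2) % 2 = 0 := by omega
  have h2 : (2 * k + 2) / 2 - 1 = k := by omega
  have h3 : 2 * k + 2 + 1 = 2 * k + 3 := by omega
  simp only [dd, if_neg h0, if_pos h1, h2, h3]

/-- Skeleton: a series supported on `{0} ∪ {even ≥ 2}`. -/
lemma hasSum_even_support {M : Type*} [AddCommMonoid M] [TopologicalSpace M] [ContinuousAdd M]
    (u : ℕ → M) (T : M) (hodd : ∀ n, n % 2 = 1 → u n = 0)
    (h : HasSum (fun k => u (2 * k + 2)) T) : HasSum u (u 0 + T) := by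
  have hinj : Function.Injective (fun k : ℕ => 2 * k + 2) := by
    intro a b hab; simp only [] at hab; omega
  have h1 : HasSum (fun n => if n = 0 then 0 else u n) T := by
    refine (Function.Injective.hasSum_iff hinj ?_).mp ?_
    · intro n hn
      rcases n with _ | m
      · simp
      · by_cases hpar : (m + 1) % 2 = 1
        · simp [hodd _ hpar]
        · exact absurd ⟨(m + 1) / 2 - 1, by simp only []; omega⟩ hn
    · refine h.congr_fun fun k => ?_
      simp [Function.comp]
  have h0 : HasSum (fun n : ℕ => if n = 0 then u 0 else 0) (u 0) := hasSum_ite_eq 0 (u 0)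
  have h2 := h0.add h1
  have heq : (fun n => (if n = 0 then u 0 else 0) + (if n = 0 then 0 else u n)) = u := by
    funext n
    by_cases hn : n = 0 <;> simp [hn]
  rwa [heq] at h2

lemma hasSum_two_add {𝕜 : Type*} [NormedField 𝕜] [CompleteSpace 𝕜] {w : 𝕜} (hw : ‖w‖ < 1) :
    HasSum (fun k : ℕ => ((2 * k + 3 : ℕ) : 𝕜) * w ^ k) ((3 - w) / (1 - w) ^ 2) := by
  have hne : (1 : 𝕜) - w ≠ 0 := by
    intro h
    have : (1 : 𝕜) = w := by linear_combination h
    rw [← this] at hw; simp at hw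
  have h1 := hasSum_coe_mul_geometric_of_norm_lt_one hw
  have h2 := hasSum_geometric_of_norm_lt_one hw
  have h3 := (h1.mul_left 2).add (h2.mul_left 3)
  have hval : (3 - w) / (1 - w) ^ 2 = 2 * (w / (1 - w) ^ 2) + 3 * (1 - w)⁻¹ := by
    field_simp; ring
  rw [hval]
  refine h3.congr_fun fun k => ?_
  push_cast; ring

/-- Derivative of `g_a`. -/
noncomputable def Dfun (a : ℝ) (z : ℂ) : ℂ :=
  (-(a : ℂ) + (3 - (a : ℂ) ^ 2) * z ^ 2 - (a : ℂ) * z ^ 4) / (1 - (a : ℂ) * z ^ 2) ^ 2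

/-- The function `g_a(z) = z(z²-a)/(1-az²)`. -/
noncomputable def gfun (a : ℝ) (z : ℂ) : ℂ :=
  (z ^ 3 - (a : ℂ) * z) / (1 - (a : ℂ) * z ^ 2)

lemma norm_dd_even (a : ℝ) (ha : 0 ≤ a) (ha1 : a ≤ 1) (k : ℕ) :
    ‖dd a (2 * k + 2)‖ = (2 * k + 3 : ℕ) * (1 - a ^ 2) * a ^ k := by
  rw [dd_even]
  have h1 : (1 : ℂ) - (a : ℂ) ^ 2 = ((1 - a ^ 2 : ℝ) : ℂ) := by push_cast; ring
  rw [h1, norm_mul, norm_mul, Complex.norm_natCast, Complex.norm_real, norm_pow,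
    Complex.norm_real]
  rw [Real.norm_eq_abs, Real.norm_eq_abs, abs_of_nonneg (by nlinarith : (0:ℝ) ≤ 1 - a ^ 2),
    abs_of_nonneg ha]

lemma one_sub_ne (a : ℝ) (ha : 0 ≤ a) (ha1 : a < 1) {z : ℂ} (hz : ‖z‖ < 1) :
    (1 : ℂ) - (a : ℂ) * z ^ 2 ≠ 0 := by
  intro h
  have h2 : ‖(a : ℂ) * z ^ 2‖ < 1 := by
    rw [norm_mul, norm_pow, Complex.norm_real, Real.norm_eq_abs, abs_of_nonneg ha]
    have hz0 : 0 ≤ ‖z‖ := norm_nonneg z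
    nlinarith
  have : (1 : ℂ) = (a : ℂ) * z ^ 2 := by linear_combination h
  rw [← this] at h2; simp at h2

lemma hasSum_complex (a : ℝ) (ha : 0 ≤ a) (ha1 : a < 1) {z : ℂ} (hz : ‖z‖ < 1) :
    HasSum (fun n => dd a n * z ^ n) (Dfun a z) := by
  set A : ℂ := (a : ℂ) with hA
  have hw : ‖A * z ^ 2‖ < 1 := by
    rw [norm_mul, norm_pow, hA, Complex.norm_real, Real.norm_eq_abs, abs_of_nonneg ha]
    have hz0 : 0 ≤ ‖z‖ := norm_nonneg z
    nlinarith
  have hne : (1 : ℂ) - A * z ^ 2 ≠ 0 := one_sub_ne a ha ha1 hz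
  have hT : HasSum (fun k : ℕ => dd a (2 * k + 2) * z ^ (2 * k + 2))
      ((1 - A ^ 2) * z ^ 2 * ((3 - A * z ^ 2) / (1 - A * z ^ 2) ^ 2)) := by
    have := (hasSum_two_add hw).mul_left ((1 - A ^ 2) * z ^ 2)
    refine this.congr_fun fun k => ?_
    rw [dd_even, mul_pow, pow_add, pow_mul]
    push_cast; ring
  have h := hasSum_even_support (fun n => dd a n * z ^ n)
      ((1 - A ^ 2) * z ^ 2 * ((3 - A * z ^ 2) / (1 - A * z ^ 2) ^ 2))
      (fun n hn => by simp [dd_odd a hn]) hT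
  have h0 : dd a 0 * z ^ 0 = -A := by simp [dd, hA]
  rw [h0] at h
  convert h using 1
  rw [Dfun, ← hA]
  field_simp
  ring

lemma hasSum_norm (a : ℝ) (ha : 0 ≤ a) (ha1 : a < 1) {r : ℝ} (hr0 : 0 ≤ r) (hr1 : r < 1) :
    HasSum (fun n => ‖dd a n‖ * r ^ n)
      (a + (1 - a ^ 2) * r ^ 2 * ((3 - a * r ^ 2) / (1 - a * r ^ 2) ^ 2)) := by
  have hw : ‖a * r ^ 2‖ < 1 := by
    rw [Real.norm_eq_abs, abs_of_nonneg (by positivity)]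
    nlinarith
  have hT : HasSum (fun k : ℕ => ‖dd a (2 * k + 2)‖ * r ^ (2 * k + 2))
      ((1 - a ^ 2) * r ^ 2 * ((3 - a * r ^ 2) / (1 - a * r ^ 2) ^ 2)) := by
    have := (hasSum_two_add hw).mul_left ((1 - a ^ 2) * r ^ 2)
    refine this.congr_fun fun k => ?_
    rw [norm_dd_even a ha ha1.le, mul_pow, pow_add, pow_mul]
    push_cast; ring
  have h := hasSum_even_support (fun n => ‖dd a n‖ * r ^ n)
      ((1 - a ^ 2) * r ^ 2 * ((3 - a * r ^ 2) / (1 - a * r ^ 2) ^ 2))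
      (fun n hn => by simp [dd_odd a hn]) hT
  have h0 : ‖dd a 0‖ * r ^ 0 = a := by
    simp [dd, abs_of_nonneg ha]
  rwa [h0] at h

lemma hasFPowerSeriesAt_D (a : ℝ) (ha : 0 ≤ a) (ha1 : a < 1) :
    HasFPowerSeriesAt (Dfun a) (FormalMultilinearSeries.ofScalars ℂ (dd a)) 0 := by
  refine ⟨((1/2 : ℝ≥0) : ℝ≥0∞), ?_, by norm_num, ?_⟩
  · apply FormalMultilinearSeries.le_radius_of_summable
    have hs := (hasSum_norm a ha ha1 (r := 1/2) (by norm_num) (by norm_num)).summable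
    refine hs.congr fun n => ?_
    rw [FormalMultilinearSeries.ofScalars_norm]
    norm_num
  · intro y hy
    rw [mem_emetric_ball_zero_iff, enorm_eq_nnnorm, ENNReal.coe_lt_coe] at hy
    have hy' : ‖y‖ < 1/2 := by exact_mod_cast hy
    have := hasSum_complex a ha ha1 (z := y) (by linarith)
    rw [zero_add]
    refine this.congr_fun fun n => ?_
    rw [FormalMultilinearSeries.ofScalars_apply_eq, smul_eq_mul]

lemma coeff_eq {F : ℂ → ℂ} {c : ℕ → ℂ}
    (h : HasFPowerSeriesAt F (FormalMultilinearSeries.ofScalars ℂ c) 0) (n : ℕ) :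
    iteratedDeriv n F 0 / n.factorial = c n := by
  obtain ⟨ρ, hρ⟩ := h
  have h1 := hρ.factorial_smul (1 : ℂ) n
  rw [FormalMultilinearSeries.ofScalars_apply_eq, one_pow, smul_eq_mul, mul_one,
    nsmul_eq_mul] at h1
  rw [iteratedDeriv_eq_iteratedFDeriv, ← h1,
    mul_div_cancel_left₀ _ (Nat.cast_ne_zero.mpr n.factorial_ne_zero : (n.factorial : ℂ) ≠ 0)]

lemma hasDerivAt_gfun (a : ℝ) (ha : 0 ≤ a) (ha1 : a < 1) {z : ℂ} (hz : ‖z‖ < 1) :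
    HasDerivAt (gfun a) (Dfun a z) z := by
  have hne := one_sub_ne a ha ha1 hz
  have hN : HasDerivAt (fun w : ℂ => w ^ 3 - (a : ℂ) * w) (3 * z ^ 2 - (a : ℂ)) z := by
    have h := (hasDerivAt_pow 3 z).sub ((hasDerivAt_id z).const_mul ((a : ℂ))); simp at h; exact h
  have hM : HasDerivAt (fun w : ℂ => 1 - (a : ℂ) * w ^ 2) (-((a : ℂ) * (2 * z))) z := by
    simpa using (((hasDerivAt_pow 2 z).const_mul ((a : ℂ))).const_sub 1)
  have h := hN.div hM hne
  refine (show HasDerivAt (gfun a) _ z from h).congr_deriv ?_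
  rw [Dfun]
  field_simp
  ring

lemma hasFPowerSeriesAt_deriv_gfun (a : ℝ) (ha : 0 ≤ a) (ha1 : a < 1) :
    HasFPowerSeriesAt (deriv (gfun a)) (FormalMultilinearSeries.ofScalars ℂ (dd a)) 0 := by
  refine (hasFPowerSeriesAt_D a ha ha1).congr ?_
  filter_upwards [Metric.ball_mem_nhds (0 : ℂ) one_pos] with z hz
  exact ((hasDerivAt_gfun a ha ha1 (mem_ball_zero_iff.mp hz)).deriv).symm

lemma majorant_deriv_gfun (a : ℝ) (ha : 0 ≤ a) (ha1 : a < 1) {r : ℝ}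
    (hr0 : 0 ≤ r) (hr1 : r < 1) :
    majorant (deriv (gfun a)) r
      = a + (1 - a ^ 2) * r ^ 2 * ((3 - a * r ^ 2) / (1 - a * r ^ 2) ^ 2) := by
  rw [majorant]
  rw [tsum_congr (fun n => by
    rw [coeff_eq (hasFPowerSeriesAt_deriv_gfun a ha ha1) n] :
    ∀ n : ℕ, ‖iteratedDeriv n (deriv (gfun a)) 0 / n.factorial‖ * r ^ n = ‖dd a n‖ * r ^ n)]
  exact (hasSum_norm a ha ha1 hr0 hr1).tsum_eq

lemma majorant_deriv_id (r : ℝ) : majorant (deriv (fun z : ℂ => z)) r = 1 := by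
  have hd : deriv (fun z : ℂ => z) = fun _ => (1 : ℂ) := by
    funext z; exact deriv_id z
  rw [majorant, hd]
  rw [tsum_eq_single 0 ?_]
  · simp
  · intro n hn
    rw [iteratedDeriv_eq_iteratedFDeriv, iteratedFDeriv_const_of_ne hn]
    simp

lemma norm_gfun_le (a : ℝ) (ha : 0 ≤ a) (ha1 : a < 1) {z : ℂ} (hz : ‖z‖ < 1) :
    ‖gfun a z‖ ≤ ‖z‖ := by
  have hne := one_sub_ne a ha ha1 hz
  have hnum : z ^ 3 - (a : ℂ) * z = z * (z ^ 2 - (a : ℂ)) := by ring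
  rw [gfun, hnum, norm_div, norm_mul]
  have hden : 0 < ‖1 - (a : ℂ) * z ^ 2‖ := norm_pos_iff.mpr hne
  rw [div_le_iff₀ hden]
  refine mul_le_mul_of_nonneg_left ?_ (norm_nonneg z)
  have hw : (z ^ 2).re ^ 2 + (z ^ 2).im ^ 2 < 1 := by
    have h1 : ‖z ^ 2‖ < 1 := by
      rw [norm_pow]
      nlinarith [norm_nonneg z]
    have h2 : ‖z ^ 2‖ ^ 2 < 1 := by nlinarith [norm_nonneg (z ^ 2)]
    rwa [Complex.sq_norm, Complex.normSq_apply, ← pow_two, ← pow_two] at h2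
  have hsq : ‖z ^ 2 - (a : ℂ)‖ ^ 2 ≤ ‖1 - (a : ℂ) * z ^ 2‖ ^ 2 := by
    rw [Complex.sq_norm, Complex.sq_norm,
      Complex.normSq_apply, Complex.normSq_apply]
    simp only [Complex.sub_re, Complex.sub_im, Complex.mul_re, Complex.mul_im,
      Complex.ofReal_re, Complex.ofReal_im, Complex.one_re, Complex.one_im]
    nlinarith [mul_nonneg (by nlinarith : (0:ℝ) ≤ 1 - a ^ 2)
      (by nlinarith : (0:ℝ) ≤ 1 - ((z ^ 2).re ^ 2 + (z ^ 2).im ^ 2))]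
  nlinarith [norm_nonneg (z ^ 2 - (a : ℂ)), norm_nonneg (1 - (a : ℂ) * z ^ 2)]

lemma analyticOnNhd_gfun (a : ℝ) (ha : 0 ≤ a) (ha1 : a < 1) :
    AnalyticOnNhd ℂ (gfun a) (ball 0 1) := by
  intro z hz
  refine AnalyticAt.div ?_ ?_ (one_sub_ne a ha ha1 (mem_ball_zero_iff.mp hz))
  · exact (analyticAt_id.pow 3).sub (analyticAt_const.mul analyticAt_id)
  · exact analyticAt_const.sub (analyticAt_const.mul (analyticAt_id.pow 2))

end SharpAux

open SharpAux in
/-- The radius `√((4 - √13)/3)` cannot be improved in the derivative comparison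
theorem for odd analytic functions. -/
theorem majorant_deriv_odd_comparison_radius_sharp :
    ∀ r : ℝ, Real.sqrt ((4 - Real.sqrt 13) / 3) < r → r < 1 →
      ∃ f g : ℂ → ℂ, AnalyticOnNhd ℂ f (ball 0 1) ∧
        AnalyticOnNhd ℂ g (ball 0 1) ∧
        (∀ z ∈ ball (0 : ℂ) 1, f (-z) = -f z) ∧
        (∀ z ∈ ball (0 : ℂ) 1, g (-z) = -g z) ∧
        Subordinate g f ∧
        (∀ z ∈ ball (0 : ℂ) 1, ‖g z‖ ≤ ‖f z‖) ∧
        majorant (deriv f) r < majorant (deriv g) r := by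
  intro r hr1 hr2
  have h13 : Real.sqrt 13 < 4 := by
    have h := Real.sqrt_lt_sqrt (by norm_num : (0:ℝ) ≤ 13) (by norm_num : (13:ℝ) < 16)
    have h16 : Real.sqrt 16 = 4 := by
      rw [show (16 : ℝ) = 4 ^ 2 by norm_num, Real.sqrt_sq (by norm_num : (0:ℝ) ≤ 4)]
    linarith [h16 ▸ h]
  have hc0 : 0 < (4 - Real.sqrt 13) / 3 := by linarith
  have hr0 : 0 < r := lt_trans (Real.sqrt_pos.mpr hc0) hr1
  have hx : (4 - Real.sqrt 13) / 3 < r ^ 2 := by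
    have := Real.lt_sq_of_sqrt_lt hr1
    linarith
  set x := r ^ 2 with hxdef
  have hx0 : 0 < x := by positivity
  have hx1 : x < 1 := by nlinarith
  have hs13 : Real.sqrt 13 ^ 2 = 13 := Real.sq_sqrt (by norm_num)
  have hkey : (1 - x) ^ 2 < 2 * x * (3 - x) := by
    have h1 : 4 - 3 * x < Real.sqrt 13 := by linarith
    have h2 : 0 < Real.sqrt 13 + (4 - 3 * x) := by
      have := Real.sqrt_nonneg (13 : ℝ); linarith
    nlinarith [mul_pos (sub_pos.mpr h1) h2]
  set B : ℝ → ℝ := fun t => -1 + (1 + t) * x * ((3 - t * x) / (1 - t * x) ^ 2) with hBdef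
  have hd : (0 : ℝ) < (1 - x) ^ 2 := by
    have : (1 : ℝ) - x ≠ 0 := by linarith
    positivity
  have hB1 : 0 < B 1 := by
    have hval : B 1 = (2 * x * (3 - x) - (1 - x) ^ 2) / (1 - x) ^ 2 := by
      simp only [hBdef]
      have : (1:ℝ) - x ≠ 0 := by linarith
      field_simp
      ring
    rw [hval]
    exact div_pos (by linarith) hd
  have hBc : ContinuousAt B 1 := by
    refine ContinuousAt.add continuousAt_const ?_
    refine ContinuousAt.mul (by fun_prop) ?_
    refine ContinuousAt.div (by fun_prop) (by fun_prop) ?_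
    simpa using (pow_ne_zero 2 (by linarith : (1 : ℝ) - 1 * x ≠ 0))
  have hev : ∀ᶠ t in nhds (1 : ℝ), 0 < B t ∧ 0 < t :=
    (hBc.eventually (eventually_gt_nhds hB1)).and (eventually_gt_nhds zero_lt_one)
  have hev2 : ∀ᶠ t in nhdsWithin (1 : ℝ) (Set.Iio 1), (0 < B t ∧ 0 < t) ∧ t < 1 :=
    (hev.filter_mono nhdsWithin_le_nhds).and eventually_mem_nhdsWithin
  obtain ⟨a, ⟨hBa, ha0⟩, ha1⟩ := hev2.exists
  have hax : a * x < 1 := by nlinarith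
  refine ⟨fun z => z, gfun a, fun z _ => analyticAt_id, analyticOnNhd_gfun a ha0.le ha1,
    fun z _ => rfl, ?_, ?_, ?_, ?_⟩
  · -- g is odd
    intro z _
    have h3 : (-z) ^ 3 - (a : ℂ) * (-z) = -(z ^ 3 - (a : ℂ) * z) := by ring
    have h2 : (-z) ^ 2 = z ^ 2 := by ring
    rw [gfun, gfun, h3, h2, neg_div]
  · -- subordination
    refine ⟨gfun a, analyticOnNhd_gfun a ha0.le ha1, by simp [gfun], ?_, fun z hz => rfl⟩
    intro z hz
    rw [mem_ball_zero_iff] at hz ⊢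
    exact lt_of_le_of_lt (norm_gfun_le a ha0.le ha1 hz) hz
  · -- norm bound
    intro z hz
    exact norm_gfun_le a ha0.le ha1 (mem_ball_zero_iff.mp hz)
  · -- majorant inequality
    rw [majorant_deriv_id, majorant_deriv_gfun a ha0.le ha1 hr0.le hr2, ← hxdef]
    have hBa' : 0 < -1 + (1 + a) * x * ((3 - a * x) / (1 - a * x) ^ 2) := hBa
    have hax' : (1 : ℝ) - a * x ≠ 0 := by linarith
    have hid : a + (1 - a ^ 2) * x * ((3 - a * x) / (1 - a * x) ^ 2)
        = 1 + (1 - a) * (-1 + (1 + a) * x * ((3 - a * x) / (1 - a * x) ^ 2)) := by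
      field_simp
      ring
    rw [hid]
    nlinarith [mul_pos (by linarith : (0:ℝ) < 1 - a) hBa']
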